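/- A space X is mH-separable if and only if for every point x ∈ X and every decreasing sequence {D_n : n ∈ ω} of dense subsets of X, there is a sequence of finite sets H^x_n ⊆ D_n such that for every open neighborhood W of x, W ∩ H^x_n ≠ ∅ for all but finitely many n. -/
import Mathlib


/-- mH-separable: the H-separable conclusion for monotone decreasing sequences
of dense sets. -/
def mHSeparable (X : Type*) [TopologicalSpace X] : Prop :=
  ∀ D : ℕ → Set X, (∀ n, D (n + 1) ⊆ D n) → (∀ n, Dense (D n)) →
    ∃ F : ℕ → Finset X, (∀ n, (F n : Set X) ⊆ D n) ∧
      ∀ A : Set ℕ, A.Infinite → Dense (⋃ n ∈ A, (F n : Set X))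

/-- A countable space is mH-separable iff for every point `x` and decreasing sequence
of dense sets `D n` there are finite `H n ⊆ D n` so that every open neighborhood of
`x` meets all but finitely many of the `H n`. -/
theorem mHSeparable_iff_local (X : Type*) [TopologicalSpace X] [Countable X] :
    mHSeparable X ↔
      ∀ x : X, ∀ D : ℕ → Set X, (∀ n, D (n + 1) ⊆ D n) → (∀ n, Dense (D n)) →
        ∃ H : ℕ → Finset X, (∀ n, (H n : Set X) ⊆ D n) ∧
          ∀ W : Set X, IsOpen W → x ∈ W →
            ∀ᶠ n in Filter.atTop, (W ∩ (H n : Set X)).Nonempty := by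
  constructor
  · intro h x D hdec hdense
    obtain ⟨F, hF, hA⟩ := h D hdec hdense
    refine ⟨F, hF, ?_⟩
    intro W hW hxW
    by_contra hc
    rw [Filter.not_eventually] at hc
    have hinf : {n | ¬ (W ∩ (F n : Set X)).Nonempty}.Infinite :=
      Nat.frequently_atTop_iff_infinite.mp hc
    have hd := hA _ hinf
    obtain ⟨y, hyW, hy⟩ := hd.inter_open_nonempty W hW ⟨x, hxW⟩
    simp only [Set.mem_iUnion] at hy
    obtain ⟨n, hn, hyF⟩ := hy
    exact hn ⟨y, hyW, hyF⟩
  · intro h D hdec hdense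
    classical
    cases isEmpty_or_nonempty X with
    | inl hE =>
      refine ⟨fun _ => ∅, fun n => by simp, fun A hA => ?_⟩
      intro z
      exact (IsEmpty.false z).elim
    | inr hN =>
      obtain ⟨f, hf⟩ := exists_surjective_nat X
      choose H hH1 hH2 using fun x => h x D hdec hdense
      refine ⟨fun n => (Finset.range (n + 1)).biUnion (fun k => H (f k) n), ?_, ?_⟩
      · intro n y hy
        simp only [Finset.coe_biUnion, Set.mem_iUnion, Finset.mem_coe,
          Finset.mem_range] at hy
        obtain ⟨k, _, hyk⟩ := hy
        exact hH1 (f k) n hyk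
      · intro A hA
        rw [dense_iff_inter_open]
        rintro U hU ⟨y, hyU⟩
        obtain ⟨k, rfl⟩ := hf y
        obtain ⟨N, hN⟩ := Filter.eventually_atTop.mp (hH2 (f k) U hU hyU)
        obtain ⟨n, hnA, hn⟩ := hA.exists_gt (max N k)
        obtain ⟨z, hzU, hzH⟩ := hN n (le_of_max_le_left hn.le)
        refine ⟨z, hzU, ?_⟩
        simp only [Set.mem_iUnion, Finset.coe_biUnion, Finset.mem_coe,
          Finset.mem_range]
        exact ⟨n, hnA, k, Nat.lt_succ_of_le (le_of_max_le_right hn.le), hzH⟩
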